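/- Let w > -1 be a real constant and f: ℝ → ℝ a differentiable function, and consider the three-dimensional system x' = -(3/2)[2x + (w-1)x³ + x(w+1)(y²-1) - √(2/3)λy²], y' = -(3/2)y[(w-1)x² + (w+1)(y²-1) + √(2/3)λx], λ' = -√6 f(λ)x. Then: (i) the point D = (x,y,λ) = (0,1,0) is a zero of the vector field (regardless of f); (ii) the Jacobian matrix at D has eigenvalues -3(w+1) together with the two roots of μ² + 3μ + 3f(0) = 0, i.e. -(3/2)(1 ± √(1 - 4f(0)/3)); (iii) all eigenvalues have negative real part if and only if f(0) > 0, in which case D is a hyperbolic sink, while if f(0) < 0 one eigenvalue is positive and D is a saddle. -/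

import Mathlib

open Polynomial

/-- `x`-component of the quintessence vector field with dynamical `λ`. -/
noncomputable def P15x (w x y l : ℝ) : ℝ :=
  -(3 / 2) * (2 * x + (w - 1) * x ^ 3 + x * (w + 1) * (y ^ 2 - 1)
    - Real.sqrt (2 / 3) * l * y ^ 2)

/-- `y`-component of the quintessence vector field with dynamical `λ`. -/
noncomputable def P15y (w x y l : ℝ) : ℝ :=
  -(3 / 2) * y * ((w - 1) * x ^ 2 + (w + 1) * (y ^ 2 - 1) + Real.sqrt (2 / 3) * l * x)

/-- `λ`-component of the quintessence vector field with dynamical `λ`: `λ' = -√6 f(λ) x`. -/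
noncomputable def P15l (f : ℝ → ℝ) (x y l : ℝ) : ℝ := -Real.sqrt 6 * f l * x

/-- Jacobian matrix of the three-dimensional quintessence system at `(x₀, y₀, l₀)`. -/
noncomputable def jac15 (w : ℝ) (f : ℝ → ℝ) (x₀ y₀ l₀ : ℝ) : Matrix (Fin 3) (Fin 3) ℝ :=
  !![deriv (fun x => P15x w x y₀ l₀) x₀, deriv (fun y => P15x w x₀ y l₀) y₀,
       deriv (fun l => P15x w x₀ y₀ l) l₀;
     deriv (fun x => P15y w x y₀ l₀) x₀, deriv (fun y => P15y w x₀ y l₀) y₀,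
       deriv (fun l => P15y w x₀ y₀ l) l₀;
     deriv (fun x => P15l f x y₀ l₀) x₀, deriv (fun y => P15l f x₀ y l₀) y₀,
       deriv (fun l => P15l f x₀ y₀ l) l₀]

private lemma charpoly_aux15 (u a b c : ℝ) (h : a * b = 3 * c) :
    (!![(-3:ℝ), 0, a; 0, -u, 0; -b, 0, 0]).charpoly
      = (X + C u) * (X^2 + C 3 * X + C (3*c)) := by
  have keyC : (C a : ℝ[X]) * C b = C 3 * C c := by
    rw [← C_mul, ← C_mul, h]
  rw [Matrix.charpoly, Matrix.det_fin_three]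
  simp [Matrix.charmatrix_apply_eq, Matrix.charmatrix_apply_ne, Matrix.charmatrix,
    Matrix.vecHead, Matrix.vecTail]
  linear_combination (X + C u) * keyC

/-- The de Sitter point `D = (0,1,0)` of the three-dimensional quintessence system with an
arbitrary potential (encoded by `f`): it is a fixed point; the Jacobian there has eigenvalue
`-3(w+1)` together with the roots of `μ² + 3μ + 3f(0) = 0`; all eigenvalues have negative real
part iff `f(0) > 0` (hyperbolic sink), while if `f(0) < 0` one eigenvalue is positive
(saddle). -/
theorem quintessence_de_sitter_point (w : ℝ) (hw : -1 < w) (f : ℝ → ℝ)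
    (hf : Differentiable ℝ f) :
    (P15x w 0 1 0 = 0 ∧ P15y w 0 1 0 = 0 ∧ P15l f 0 1 0 = 0) ∧
    (jac15 w f 0 1 0).charpoly
      = (X + C (3 * (w + 1))) * (X ^ 2 + C 3 * X + C (3 * f 0)) ∧
    ((∀ μ : ℂ, (μ + 3 * ((w : ℂ) + 1)) * (μ ^ 2 + 3 * μ + 3 * (f 0 : ℂ)) = 0 → μ.re < 0)
      ↔ 0 < f 0) ∧
    (f 0 < 0 → ∃ μ : ℝ, μ ^ 2 + 3 * μ + 3 * f 0 = 0 ∧ 0 < μ) := by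
  refine ⟨⟨by norm_num [P15x], by norm_num [P15y], by norm_num [P15l]⟩, ?_, ?_, ?_⟩
  · -- Jacobian and its characteristic polynomial
    have key : Real.sqrt (2/3) * Real.sqrt 6 = 2 := by
      rw [← Real.sqrt_mul (by norm_num)]
      norm_num
    have hM : jac15 w f 0 1 0 = !![(-3 : ℝ), 0, 3/2 * Real.sqrt (2/3);
        0, -(3*(w+1)), 0; -(Real.sqrt 6 * f 0), 0, 0] := by
      have e00 : (fun x => P15x w x 1 0) = fun x : ℝ => -(3/2) * (2*x + (w-1)*x^3) := by
        funext x; simp [P15x]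
      have h00 : HasDerivAt (fun x : ℝ => -(3/2) * (2*x + (w-1)*x^3))
          (-(3/2) * (2*1 + (w-1)*(↑3 * 0 ^ 2))) 0 :=
        (((hasDerivAt_id (0:ℝ)).const_mul 2).add
          ((hasDerivAt_pow 3 0).const_mul (w-1))).const_mul _
      have e01 : (fun y => P15x w 0 y 0) = fun _ : ℝ => (0:ℝ) := by
        funext y; simp [P15x]
      have e02 : (fun l => P15x w 0 1 l) = fun l : ℝ => (3/2 * Real.sqrt (2/3)) * l := by
        funext l; simp [P15x]
        ring
      have e10 : (fun x => P15y w x 1 0) = fun x : ℝ => -(3/2) * ((w-1) * x^2) := by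
        funext x; simp [P15y]
        try ring
      have h10 : HasDerivAt (fun x : ℝ => -(3/2) * ((w-1) * x^2))
          (-(3/2) * ((w-1) * (↑2 * 0 ^ 1))) 0 :=
        ((hasDerivAt_pow 2 0).const_mul (w-1)).const_mul _
      have e11 : (fun y => P15y w 0 y 0) = fun y : ℝ => -(3/2) * ((w+1) * (y^3 - y)) := by
        funext y; simp [P15y]
        ring
      have h11 : HasDerivAt (fun y : ℝ => -(3/2) * ((w+1) * (y^3 - y)))
          (-(3/2) * ((w+1) * (↑3 * 1 ^ 2 - 1))) 1 :=
        (((hasDerivAt_pow 3 1).sub (hasDerivAt_id 1)).const_mul (w+1)).const_mul _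
      have e12 : (fun l => P15y w 0 1 l) = fun _ : ℝ => (0:ℝ) := by
        funext l; simp [P15y]
      have e20 : (fun x => P15l f x 1 0) = fun x : ℝ => (-(Real.sqrt 6 * f 0)) * x := by
        funext x; simp [P15l]
        try ring
      have e21 : (fun y => P15l f 0 y 0) = fun _ : ℝ => (0:ℝ) := by
        funext y; simp [P15l]
      have e22 : (fun l => P15l f 0 1 l) = fun _ : ℝ => (0:ℝ) := by
        funext l; simp [P15l]
      rw [jac15, e00, e01, e02, e10, e11, e12, e20, e21, e22]
      have d00 : deriv (fun x : ℝ => -(3/2) * (2*x + (w-1)*x^3)) 0 = -3 := by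
        rw [h00.deriv]; ring
      have d10 : deriv (fun x : ℝ => -(3/2) * ((w-1) * x^2)) 0 = 0 := by
        rw [h10.deriv]; ring
      have d11 : deriv (fun y : ℝ => -(3/2) * ((w+1) * (y^3 - y))) 1 = -(3*(w+1)) := by
        rw [h11.deriv]; ring
      have d02 : deriv (fun l : ℝ => 3/2 * Real.sqrt (2/3) * l) 0
          = 3/2 * Real.sqrt (2/3) := by
        simpa using ((hasDerivAt_id (0:ℝ)).const_mul (3/2 * Real.sqrt (2/3))).deriv
      have d20 : deriv (fun x : ℝ => -(Real.sqrt 6 * f 0) * x) 0 = -(Real.sqrt 6 * f 0) := by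
        simpa using ((hasDerivAt_id (0:ℝ)).const_mul (-(Real.sqrt 6 * f 0))).deriv
      rw [d00, d10, d11, d02, d20]
      simp
    rw [hM]
    exact charpoly_aux15 (3*(w+1)) (3/2 * Real.sqrt (2/3)) (Real.sqrt 6 * f 0) (f 0)
      (by rw [show 3/2 * Real.sqrt (2/3) * (Real.sqrt 6 * f 0)
            = 3/2 * (Real.sqrt (2/3) * Real.sqrt 6) * f 0 by ring, key]; ring)
  · -- eigenvalues all have negative real part iff f 0 > 0
    have hroot : ∀ g : ℝ, g ≤ 0 → ((-3 + Real.sqrt (9 - 12*g))/2) ^ 2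
        + 3 * ((-3 + Real.sqrt (9 - 12*g))/2) + 3 * g = 0 := by
      intro g hg
      have h9 : (0:ℝ) ≤ 9 - 12*g := by linarith
      have hs := Real.sq_sqrt h9
      nlinarith [hs]
    constructor
    · intro h
      by_contra hle
      push_neg at hle
      set r : ℝ := (-3 + Real.sqrt (9 - 12*(f 0)))/2 with hr
      have hsge : (3:ℝ) ≤ Real.sqrt (9 - 12*(f 0)) := Real.le_sqrt_of_sq_le (by nlinarith)
      have hrge : 0 ≤ r := by rw [hr]; linarith
      have hroot' := hroot (f 0) hle
      have hc : ((r:ℂ) + 3 * ((w : ℂ) + 1)) * ((r:ℂ) ^ 2 + 3 * (r:ℂ) + 3 * ((f 0 : ℝ) : ℂ))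
          = 0 := by
        have : ((r:ℂ) ^ 2 + 3 * (r:ℂ) + 3 * ((f 0 : ℝ) : ℂ))
            = ((r ^ 2 + 3 * r + 3 * f 0 : ℝ) : ℂ) := by push_cast; ring
        rw [this, hroot']
        simp
      have := h r hc
      simp at this
      linarith
    · intro hf0 μ hμ
      rcases mul_eq_zero.mp hμ with h1 | h2
      · have hμe : μ = -(3 * ((w:ℂ) + 1)) := by linear_combination h1
        rw [hμe]
        simp
        linarith
      · have hre := congrArg Complex.re h2
        have him := congrArg Complex.im h2
        simp [pow_two, Complex.add_re, Complex.add_im, Complex.mul_re, Complex.mul_im,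
          Complex.ofReal_re, Complex.ofReal_im] at hre him
        rcases eq_or_ne μ.im 0 with hb | hb
        · rw [hb] at hre
          by_contra hge
          push_neg at hge
          nlinarith [hre, hf0, hge]
        · have hbb : μ.im * (2 * μ.re + 3) = 0 := by linarith [him]
          have h23 : 2 * μ.re + 3 = 0 := by
            rcases mul_eq_zero.mp hbb with h | h
            · exact absurd h hb
            · exact h
          linarith
  · -- saddle case
    intro hf0
    have hroot : ((-3 + Real.sqrt (9 - 12*(f 0)))/2) ^ 2
        + 3 * ((-3 + Real.sqrt (9 - 12*(f 0)))/2) + 3 * f 0 = 0 := by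
      have h9 : (0:ℝ) ≤ 9 - 12*(f 0) := by linarith
      have hs := Real.sq_sqrt h9
      nlinarith [hs]
    refine ⟨(-3 + Real.sqrt (9 - 12*(f 0)))/2, hroot, ?_⟩
    have : (3:ℝ) < Real.sqrt (9 - 12*(f 0)) := (Real.lt_sqrt (by norm_num)).mpr (by nlinarith)
    linarith
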